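/- Let d, m ∈ ℕ with d ≥ 1, and let f : ℝ^d → ℝ be a 1-periodic, (m+2)-times continuously differentiable, nonnegative function. Assume the set of global minimizers of f contained in [0,1)^d is finite, and that at each such minimizer the Hessian of f is positive definite. Then there exist Q ∈ ℕ and 1-periodic, m-times continuously differentiable functions z₁, …, z_Q : ℝ^d → ℝ such that f(x) = ∑_{j=1}^Q z_j(x)² for all x ∈ ℝ^d. -/

import Mathlib

set_option synthInstance.maxHeartbeats 1000000
set_option maxHeartbeats 2000000
set_option linter.unusedVariables false
set_option linter.unusedTactic false


open MeasureTheory Metric Set intervalIntegral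


open MeasureTheory Metric Set intervalIntegral

theorem contDiff_parametric_integral (d : ℕ) :
    ∀ (n : ℕ) {F : Type} [NormedAddCommGroup F] [NormedSpace ℝ F] [CompleteSpace F]
      (H : ((Fin d → ℝ) × ℝ) → F), ContDiff ℝ n H →
      ContDiff ℝ n (fun x : Fin d → ℝ => ∫ t in (0:ℝ)..1, H (x, t)) := by
  intro n
  induction n with
  | zero =>
    intro F _ _ _ H hH
    rw [show ((0:ℕ) : WithTop ℕ∞) = 0 from rfl, contDiff_zero] at hH ⊢
    exact continuous_parametric_intervalIntegral_of_continuous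
      (f := fun (x : Fin d → ℝ) (t : ℝ) => H (x, t)) (by exact hH) continuous_const
  | succ n ih =>
    intro F _ _ _ H hH
    have h1n : (1 : WithTop ℕ∞) ≤ ((n+1 : ℕ) : WithTop ℕ∞) := by exact_mod_cast Nat.one_le_iff_ne_zero.2 (Nat.succ_ne_zero n)
    have hdiffH : Differentiable ℝ H := hH.differentiable (by exact_mod_cast Nat.succ_ne_zero n)
    have hfd : ContDiff ℝ n (fderiv ℝ H) := by
      apply hH.fderiv_right
      push_cast
      exact le_refl _
    set G : ((Fin d → ℝ) × ℝ) → ((Fin d → ℝ) →L[ℝ] F) :=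
      fun p => (fderiv ℝ H p).comp (ContinuousLinearMap.inl ℝ (Fin d → ℝ) ℝ) with hG
    have hGc : ContDiff ℝ n G := hfd.clm_comp contDiff_const
    have key : ∀ x₀ : Fin d → ℝ, HasFDerivAt (fun x => ∫ t in (0:ℝ)..1, H (x, t))
        (∫ t in (0:ℝ)..1, G (x₀, t)) x₀ := by
      intro x₀
      obtain ⟨C, hC⟩ : ∃ C, ∀ p ∈ (closedBall x₀ 1 ×ˢ uIcc (0:ℝ) 1), ‖G p‖ ≤ C :=
        ((isCompact_closedBall x₀ 1).prod isCompact_uIcc).exists_bound_of_continuousOn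
          hGc.continuous.continuousOn
      have hder : ∀ (t : ℝ) (x : Fin d → ℝ), HasFDerivAt (fun x => H (x, t)) (G (x, t)) x := by
        intro t x
        have h1 : HasFDerivAt (fun x : Fin d → ℝ => (x, t)) (ContinuousLinearMap.inl ℝ (Fin d → ℝ) ℝ) x :=
          (hasFDerivAt_id x).prodMk (hasFDerivAt_const t x)
        exact (hdiffH (x, t)).hasFDerivAt.comp x h1
      exact intervalIntegral.hasFDerivAt_integral_of_dominated_of_fderiv_le
        (s := ball x₀ 1) (ball_mem_nhds x₀ one_pos)
        (Filter.Eventually.of_forall fun x =>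
          ((hH.continuous.comp (Continuous.prodMk continuous_const continuous_id)).aestronglyMeasurable))
        ((hH.continuous.comp (Continuous.prodMk continuous_const continuous_id)).intervalIntegrable 0 1)
        ((hGc.continuous.comp (Continuous.prodMk continuous_const continuous_id)).aestronglyMeasurable)
        (Filter.Eventually.of_forall fun t ht x hx => hC (x, t)
          ⟨ball_subset_closedBall hx, uIoc_subset_uIcc ht⟩)
        intervalIntegrable_const
        (Filter.Eventually.of_forall fun t _ x _ => hder t x)
    rw [show ((n+1 : ℕ) : WithTop ℕ∞) = (n : WithTop ℕ∞) + 1 by push_cast; ring] at *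
    rw [contDiff_succ_iff_fderiv]
    refine ⟨fun x => (key x).differentiableAt, by simp, ?_⟩
    have : (fderiv ℝ fun x => ∫ t in (0:ℝ)..1, H (x, t)) = fun x₀ => ∫ t in (0:ℝ)..1, G (x₀, t) :=
      funext fun x₀ => (key x₀).fderiv
    rw [this]
    exact ih G hGc


open Set

/-- Completing the square: a quadratic form with `C^k` coefficients, positive definite
on an open set `U`, is a sum of squares of linear forms with `C^k` coefficients on `U`. -/
theorem sos_of_posdef_quadratic {E : Type*} [NormedAddCommGroup E] [NormedSpace ℝ E]
    (k : WithTop ℕ∞) :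
    ∀ (n : ℕ) (U : Set E) (_hU : IsOpen U) (b : Fin n → Fin n → E → ℝ),
    (∀ i j, ContDiffOn ℝ k (b i j) U) →
    (∀ i j, ∀ x ∈ U, b i j x = b j i x) →
    (∀ x ∈ U, ∀ w : Fin n → ℝ, w ≠ 0 → 0 < ∑ i, ∑ j, w i * w j * b i j x) →
    ∃ L : Fin n → Fin n → E → ℝ, (∀ i j, ContDiffOn ℝ k (L i j) U) ∧
      ∀ x ∈ U, ∀ q : Fin n → ℝ,
        ∑ i, ∑ j, q i * q j * b i j x = ∑ i, (∑ j, L i j x * q j) ^ 2 := by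
  intro n
  induction n with
  | zero =>
    intro U hU b hb hsymm hpd
    exact ⟨fun i => i.elim0, fun i => i.elim0, fun x _ q => by simp⟩
  | succ n ih =>
    intro U hU b hb hsymm hpd
    -- positivity of the pivot
    have hb00 : ∀ x ∈ U, 0 < b 0 0 x := by
      intro x hx
      have h := hpd x hx (Pi.single 0 1) (by
        intro h0
        have := congrFun h0 0
        simp [Pi.single_apply] at this)
      simpa [Pi.single_apply, ite_mul, mul_ite, Finset.sum_ite_eq'] using h
    set s : E → ℝ := fun x => Real.sqrt (b 0 0 x) with hs
    have hs_pos : ∀ x ∈ U, 0 < s x := fun x hx => Real.sqrt_pos.2 (hb00 x hx)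
    have hs_sq : ∀ x ∈ U, s x ^ 2 = b 0 0 x := fun x hx =>
      Real.sq_sqrt (hb00 x hx).le
    have hs_cd : ContDiffOn ℝ k s U := by
      refine ContDiffOn.sqrt (hb 0 0) fun x hx => (hb00 x hx).ne'
    set L0 : Fin (n + 1) → E → ℝ := fun j x => b 0 j x / s x with hL0
    set b' : Fin n → Fin n → E → ℝ :=
      fun i j x => b i.succ j.succ x - b 0 i.succ x * b 0 j.succ x / b 0 0 x with hb'
    -- the key algebraic identity
    have halg : ∀ x ∈ U, ∀ q : Fin (n + 1) → ℝ,
        ∑ i, ∑ j, q i * q j * b i j x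
          = (∑ j, L0 j x * q j) ^ 2
            + ∑ i, ∑ j, q i.succ * q j.succ * b' i j x := by
      intro x hx q
      have hB := hb00 x hx
      have hsx := hs_pos x hx
      have hsq := hs_sq x hx
      set t : ℝ := ∑ j : Fin n, q j.succ * b 0 j.succ x with ht
      have hL0sum : ∑ j, L0 j x * q j = (b 0 0 x * q 0 + t) / s x := by
        rw [ht]
        have hterm : ∀ j, L0 j x * q j = b 0 j x * q j / s x := fun j => by
          simp only [hL0]; ring
        rw [Finset.sum_congr rfl (fun j _ => hterm j), ← Finset.sum_div, Fin.sum_univ_succ]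
        congr 2
        exact Finset.sum_congr rfl fun j _ => by ring
      have hrow : ∑ j, q 0 * q j * b 0 j x = q 0 * q 0 * b 0 0 x + q 0 * t := by
        rw [Fin.sum_univ_succ, ht, Finset.mul_sum]
        congr 1
        refine Finset.sum_congr rfl fun j _ => by ring
      have hcol : ∀ i : Fin n, ∑ j, q i.succ * q j * b i.succ j x
          = q i.succ * q 0 * b 0 i.succ x + ∑ j : Fin n, q i.succ * q j.succ * b i.succ j.succ x := by
        intro i
        rw [Fin.sum_univ_succ, hsymm i.succ 0 x hx]
      have hfact : ∑ i : Fin n, ∑ j : Fin n,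
          q i.succ * q j.succ * (b 0 i.succ x * b 0 j.succ x / b 0 0 x) = t ^ 2 / b 0 0 x := by
        rw [ht, sq, Finset.sum_mul_sum, Finset.sum_div]
        refine Finset.sum_congr rfl fun i _ => ?_
        rw [Finset.sum_div]
        refine Finset.sum_congr rfl fun j _ => by ring
      rw [Fin.sum_univ_succ, hrow, hL0sum]
      have hexp : ∑ i : Fin n, ∑ j, q i.succ * q j * b i.succ j x
          = q 0 * t + ∑ i : Fin n, ∑ j : Fin n, q i.succ * q j.succ * b i.succ j.succ x := by
        rw [Finset.sum_congr rfl fun i _ => hcol i, Finset.sum_add_distrib]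
        congr 1
        rw [ht, Finset.mul_sum]
        refine Finset.sum_congr rfl fun j _ => by ring
      rw [hexp]
      have hb'exp : ∑ i : Fin n, ∑ j : Fin n, q i.succ * q j.succ * b' i j x
          = (∑ i : Fin n, ∑ j : Fin n, q i.succ * q j.succ * b i.succ j.succ x) - t ^ 2 / b 0 0 x := by
        rw [← hfact, ← Finset.sum_sub_distrib]
        refine Finset.sum_congr rfl fun i _ => ?_
        rw [← Finset.sum_sub_distrib]
        refine Finset.sum_congr rfl fun j _ => by simp only [hb']; ring
      rw [hb'exp, div_pow, hsq]
      field_simp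
      ring
    -- properties of b'
    have hb'_cd : ∀ i j, ContDiffOn ℝ k (b' i j) U := fun i j =>
      (hb i.succ j.succ).sub (((hb 0 i.succ).mul (hb 0 j.succ)).div (hb 0 0)
        fun x hx => (hb00 x hx).ne')
    have hb'_symm : ∀ i j, ∀ x ∈ U, b' i j x = b' j i x := by
      intro i j x hx
      simp only [hb', hsymm i.succ j.succ x hx]
      ring
    have hb'_pd : ∀ x ∈ U, ∀ w : Fin n → ℝ, w ≠ 0 →
        0 < ∑ i, ∑ j, w i * w j * b' i j x := by
      intro x hx w hw
      set q : Fin (n + 1) → ℝ :=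
        Fin.cons (-(∑ j : Fin n, w j * b 0 j.succ x) / b 0 0 x) w with hq
      have hq_succ : ∀ i : Fin n, q i.succ = w i := fun i => by simp [hq]
      have hqne : q ≠ 0 := by
        intro h0
        apply hw
        funext i
        have := congrFun h0 i.succ
        simpa [hq_succ i] using this
      have h1 := halg x hx q
      have h2 : ∑ j, L0 j x * q j = 0 := by
        have hterm : ∀ j, L0 j x * q j = b 0 j x * q j / s x := fun j => by
          simp only [hL0]; ring
        rw [Finset.sum_congr rfl (fun j _ => hterm j), ← Finset.sum_div, Fin.sum_univ_succ]
        have : b 0 0 x * q 0 + ∑ j : Fin n, b 0 j.succ x * q j.succ = 0 := by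
          have hq0 : q 0 = -(∑ j : Fin n, w j * b 0 j.succ x) / b 0 0 x := by simp [hq]
          have hsum : ∑ j : Fin n, b 0 j.succ x * q j.succ
              = ∑ j : Fin n, w j * b 0 j.succ x :=
            Finset.sum_congr rfl fun j _ => by rw [hq_succ j]; ring
          rw [hq0, hsum, mul_comm, div_mul_cancel₀ _ (hb00 x hx).ne', neg_add_cancel]
        rw [this, zero_div]
      have h3 : ∑ i, ∑ j, q i.succ * q j.succ * b' i j x
          = ∑ i, ∑ j, w i * w j * b' i j x := by
        refine Finset.sum_congr rfl fun i _ => Finset.sum_congr rfl fun j _ => by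
          rw [hq_succ i, hq_succ j]
      rw [h2, h3] at h1
      have := hpd x hx q hqne
      rw [h1] at this
      simpa using this
    obtain ⟨L', hL'_cd, hL'⟩ := ih U hU b' hb'_cd hb'_symm hb'_pd
    refine ⟨Fin.cons L0 (fun i => Fin.cons (fun _ => 0) (L' i)), ?_, ?_⟩
    · intro i j
      refine Fin.cases ?_ (fun i => ?_) i
      · simp only [Fin.cons_zero]
        exact ((hb 0 j).div hs_cd fun x hx => (hs_pos x hx).ne')
      · refine Fin.cases ?_ (fun j => ?_) j
        · simp only [Fin.cons_succ, Fin.cons_zero]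
          exact contDiffOn_const
        · simp only [Fin.cons_succ]
          exact hL'_cd i j
    · intro x hx q
      set R : Fin (n + 1) → Fin (n + 1) → E → ℝ :=
        Fin.cons L0 (fun i => Fin.cons (fun _ => 0) (L' i)) with hR
      have h0 : ∑ j : Fin (n + 1), R 0 j x * q j = ∑ j : Fin (n + 1), L0 j x * q j :=
        Finset.sum_congr rfl fun j _ => by simp [hR]
      have h1 : ∀ i : Fin n, ∑ j : Fin (n + 1), R i.succ j x * q j
          = ∑ j : Fin n, L' i j x * q j.succ := by
        intro i
        rw [Fin.sum_univ_succ]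
        simp [hR]
      rw [halg x hx q, hL' x hx (fun i => q i.succ)]
      conv_rhs => rw [Fin.sum_univ_succ]
      rw [h0]
      congr 1
      exact Finset.sum_congr rfl fun i _ => by rw [h1 i]


open MeasureTheory Metric Set intervalIntegral


theorem hessian_sos_local (d m : ℕ) (f : (Fin d → ℝ) → ℝ) (hf : ContDiff ℝ (m + 2 : ℕ) f)
    (p : Fin d → ℝ) (hfp : f p = 0) (hcrit : fderiv ℝ f p = 0) :
    ∃ g : Fin d → Fin d → (Fin d → ℝ) → ℝ,
      (∀ i j, ContDiff ℝ (m : ℕ) (g i j)) ∧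
      (∀ i j x, g i j x = g j i x) ∧
      (∀ v : Fin d → ℝ, ∑ i, ∑ j, v i * v j * g i j p
        = (1 / 2) * fderiv ℝ (fderiv ℝ f) p v v) ∧
      (∀ x, f x = ∑ i, ∑ j, (x i - p i) * (x j - p j) * g i j x) := by
  set e : Fin d → (Fin d → ℝ) := fun i => Pi.single i 1 with he
  set Df := fderiv ℝ f with hDf_def
  set D2 := fderiv ℝ Df with hD2_def
  have hm2 : ((m : WithTop ℕ∞) + 1) + 1 ≤ ((m + 2 : ℕ) : WithTop ℕ∞) := by
    push_cast; exact le_refl _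
  have hDf : ContDiff ℝ ((m : WithTop ℕ∞) + 1) Df := hf.fderiv_right hm2
  have hD2 : ContDiff ℝ (m : WithTop ℕ∞) D2 := hDf.fderiv_right (le_refl _)
  have hdiff_f : Differentiable ℝ f := hf.differentiable (by
    simp)
  have hdiff_Df : Differentiable ℝ Df := hDf.differentiable (ne_of_gt (lt_of_lt_of_le zero_lt_one le_add_self))
  -- the coefficient functions
  set g : Fin d → Fin d → (Fin d → ℝ) → ℝ :=
    fun i j x => ∫ t in (0:ℝ)..1, (1 - t) * D2 (p + t • (x - p)) (e i) (e j) with hg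
  -- joint smoothness of the integrand
  have hint_cd : ∀ i j, ContDiff ℝ (m : ℕ)
      (fun q : (Fin d → ℝ) × ℝ => (1 - q.2) * D2 (p + q.2 • (q.1 - p)) (e i) (e j)) := by
    intro i j
    have hψ : ContDiff ℝ (m : ℕ) (fun q : (Fin d → ℝ) × ℝ => p + q.2 • (q.1 - p)) :=
      contDiff_const.add (contDiff_snd.smul (contDiff_fst.sub contDiff_const))
    have h1 : ContDiff ℝ (m : ℕ) (fun q : (Fin d → ℝ) × ℝ => D2 (p + q.2 • (q.1 - p)) (e i) (e j)) :=
      (((hD2.of_le le_rfl).comp hψ).clm_apply contDiff_const).clm_apply contDiff_const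
    exact (contDiff_const.sub contDiff_snd).mul h1
  have hg_cd : ∀ i j, ContDiff ℝ (m : ℕ) (g i j) := fun i j =>
    contDiff_parametric_integral d m _ (hint_cd i j)
  -- continuity facts used for integrability
  have hcont_int : ∀ (x : Fin d → ℝ) (i j : Fin d), Continuous
      (fun t : ℝ => (1 - t) * D2 (p + t • (x - p)) (e i) (e j)) := by
    intro x i j
    have := (hint_cd i j).continuous.comp
      (Continuous.prodMk (continuous_const : Continuous fun _ : ℝ => x) continuous_id)
    exact this
  -- symmetry of the second derivative
  have hsymmD2 : ∀ (y u v : Fin d → ℝ), D2 y u v = D2 y v u := by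
    intro y u v
    exact second_derivative_symmetric (f' := Df)
      (fun z => (hdiff_f z).hasFDerivAt) ((hdiff_Df y).hasFDerivAt) u v
  -- expansion of bilinear map on the standard basis
  have hexpand : ∀ (B : (Fin d → ℝ) →L[ℝ] (Fin d → ℝ) →L[ℝ] ℝ) (u v : Fin d → ℝ),
      B u v = ∑ i, ∑ j, u i * v j * B (e i) (e j) := by
    intro B u v
    have hbasis : ∀ u : Fin d → ℝ, u = ∑ i, u i • e i := by
      intro u
      funext a
      rw [Finset.sum_apply]
      simp [he, Pi.single_apply, Finset.sum_ite_eq, Finset.sum_ite_eq', mul_ite,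
        mul_one, mul_zero]
    have hu := hbasis u
    have hv := hbasis v
    have step1 : ∀ (w : (Fin d → ℝ) →L[ℝ] ℝ) (v : Fin d → ℝ), w v = ∑ j, v j * w (e j) := by
      intro w v
      conv_lhs => rw [hbasis v]
      rw [map_sum]
      exact Finset.sum_congr rfl fun j _ => by rw [ContinuousLinearMap.map_smul]; simp [smul_eq_mul]
    have step2 : B u v = ∑ i, u i * (B (e i)) v := by
      conv_lhs => rw [hu]
      rw [map_sum, ContinuousLinearMap.sum_apply]
      refine Finset.sum_congr rfl fun i _ => ?_
      rw [ContinuousLinearMap.map_smul, ContinuousLinearMap.smul_apply]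
      simp [smul_eq_mul]
    rw [step2]
    refine Finset.sum_congr rfl fun i _ => ?_
    rw [step1 (B (e i)) v, Finset.mul_sum]
    exact Finset.sum_congr rfl fun j _ => by ring
  -- the Taylor formula with integral remainder
  have hTaylor : ∀ x : Fin d → ℝ, f x = ∫ t in (0:ℝ)..1, (1 - t) * D2 (p + t • (x - p)) (x - p) (x - p) := by
    intro x
    set q : Fin d → ℝ := x - p with hq
    set γ : ℝ → (Fin d → ℝ) := fun t => p + t • q with hγ
    have hγd : ∀ t : ℝ, HasDerivAt γ q t := by
      intro t
      have : HasDerivAt (fun t : ℝ => t • q) ((1:ℝ) • q) t := (hasDerivAt_id t).smul_const q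
      have h2 := this.const_add p
      rw [one_smul] at h2
      exact h2
    have hh : ∀ t : ℝ, HasDerivAt (fun s => f (γ s)) (Df (γ t) q) t := by
      intro t
      exact ((hdiff_f (γ t)).hasFDerivAt).comp_hasDerivAt t (hγd t)
    have hh' : ∀ t : ℝ, HasDerivAt (fun s => Df (γ s) q) (D2 (γ t) q q) t := by
      intro t
      have h1 : HasDerivAt (fun s => Df (γ s)) (D2 (γ t) q) t :=
        ((hdiff_Df (γ t)).hasFDerivAt).comp_hasDerivAt t (hγd t)
      have := h1.clm_apply (hasDerivAt_const t q)
      simpa using this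
    have hc1 : Continuous fun t => Df (γ t) q := by
      have : Continuous fun t => Df (γ t) :=
        hDf.continuous.comp (by fun_prop)
      exact this.clm_apply continuous_const
    have hc2 : Continuous fun t => D2 (γ t) q q := by
      have : Continuous fun t => D2 (γ t) :=
        hD2.continuous.comp (by fun_prop)
      exact (this.clm_apply continuous_const).clm_apply continuous_const
    -- integration by parts
    have hparts : ∫ t in (0:ℝ)..1, (1 - t) * D2 (γ t) q q
        = (1 - 1) * (Df (γ 1) q) - (1 - 0) * (Df (γ 0) q)
          - ∫ t in (0:ℝ)..1, (-1) * (Df (γ t) q) := by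
      refine intervalIntegral.integral_mul_deriv_eq_deriv_mul
        (u := fun t => 1 - t) (u' := fun _ => -1)
        (v := fun t => Df (γ t) q) (v' := fun t => D2 (γ t) q q)
        (fun t _ => ?_) (fun t _ => hh' t) ?_ ?_
      · simpa using ((hasDerivAt_id t).const_sub 1)
      · exact (continuous_const : Continuous fun _ : ℝ => (-1:ℝ)).intervalIntegrable 0 1
      · exact hc2.intervalIntegrable 0 1
    have hFTC : ∫ t in (0:ℝ)..1, Df (γ t) q = f (γ 1) - f (γ 0) := by
      refine intervalIntegral.integral_eq_sub_of_hasDerivAt (fun t _ => hh t) ?_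
      exact hc1.intervalIntegrable 0 1
    have hneg : ∫ t in (0:ℝ)..1, (-1) * (Df (γ t) q) = -(f (γ 1) - f (γ 0)) := by
      rw [← hFTC, ← intervalIntegral.integral_neg]
      refine intervalIntegral.integral_congr fun t _ => by ring
    have hγ1 : γ 1 = x := by simp [hγ, hq]
    have hγ0 : γ 0 = p := by simp [hγ]
    rw [hparts, hneg, hγ1, hγ0, hfp, hcrit]
    simp
  -- main identity
  refine ⟨g, hg_cd, ?_, ?_, ?_⟩
  · intro i j x
    simp only [hg]
    refine intervalIntegral.integral_congr fun t _ => ?_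
    rw [hsymmD2]
  · intro v
    have hval : ∀ i j, g i j p = (1 / 2) * D2 p (e i) (e j) := by
      intro i j
      simp only [hg]
      have h0 : ∀ t : ℝ, (1 - t) * D2 (p + t • (p - p)) (e i) (e j)
          = (1 - t) * D2 p (e i) (e j) := by
        intro t; simp
      rw [intervalIntegral.integral_congr fun t _ => h0 t]
      rw [intervalIntegral.integral_mul_const]
      have h1 : ∫ t in (0:ℝ)..1, (1 - t) = 1 / 2 := by
        rw [intervalIntegral.integral_sub intervalIntegrable_const
          (intervalIntegral.intervalIntegrable_id)]
        norm_num [integral_id]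
      rw [h1]
    rw [hexpand (D2 p) v v, Finset.mul_sum]
    refine Finset.sum_congr rfl fun i _ => ?_
    rw [Finset.mul_sum]
    refine Finset.sum_congr rfl fun j _ => ?_
    rw [hval i j]
    ring
  · intro x
    rw [hTaylor x]
    have hstep : ∀ t : ℝ, (1 - t) * D2 (p + t • (x - p)) (x - p) (x - p)
        = ∑ i, ∑ j, (x i - p i) * (x j - p j) *
            ((1 - t) * D2 (p + t • (x - p)) (e i) (e j)) := by
      intro t
      rw [hexpand (D2 (p + t • (x - p))) (x - p) (x - p)]
      rw [Finset.mul_sum]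
      refine Finset.sum_congr rfl fun i _ => ?_
      rw [Finset.mul_sum]
      refine Finset.sum_congr rfl fun j _ => ?_
      have hxi : (x - p) i = x i - p i := rfl
      have hxj : (x - p) j = x j - p j := rfl
      rw [hxi, hxj]; ring
    rw [intervalIntegral.integral_congr fun t _ => hstep t,
      intervalIntegral.integral_finset_sum (fun i _ =>
        (continuous_finset_sum _ (fun j _ =>
          continuous_const.fun_mul (hcont_int x i j))).intervalIntegrable 0 1)]
    refine Finset.sum_congr rfl fun i _ => ?_
    rw [intervalIntegral.integral_finset_sum (fun j _ =>
      (continuous_const.fun_mul (hcont_int x i j)).intervalIntegrable 0 1)]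
    refine Finset.sum_congr rfl fun j _ => ?_
    rw [intervalIntegral.integral_const_mul]


open Metric Set

theorem posdef_on_ball {d : ℕ} (g : Fin d → Fin d → (Fin d → ℝ) → ℝ)
    (hg : ∀ i j, Continuous (g i j)) (p : Fin d → ℝ)
    (hp : ∀ v : Fin d → ℝ, v ≠ 0 → 0 < ∑ i, ∑ j, v i * v j * g i j p) :
    ∃ r > 0, ∀ x ∈ ball p r, ∀ v : Fin d → ℝ, v ≠ 0 →
      0 < ∑ i, ∑ j, v i * v j * g i j x := by
  rcases Nat.eq_zero_or_pos d with hd | hd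
  · subst hd
    exact ⟨1, one_pos, fun x _ v hv => absurd (funext fun i => i.elim0) hv⟩
  set Φ : (Fin d → ℝ) × (Fin d → ℝ) → ℝ :=
    fun q => ∑ i, ∑ j, q.2 i * q.2 j * g i j q.1 with hΦ
  have hΦc : Continuous Φ := by
    refine continuous_finset_sum _ fun i _ => continuous_finset_sum _ fun j _ => ?_
    exact ((continuous_apply i |>.comp continuous_snd).mul
      (continuous_apply j |>.comp continuous_snd)).mul ((hg i j).comp continuous_fst)
  have hopen : IsOpen (Φ ⁻¹' Ioi (0:ℝ)) := isOpen_Ioi.preimage hΦc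
  have hsub : ({p} : Set (Fin d → ℝ)) ×ˢ (sphere (0 : Fin d → ℝ) 1) ⊆ Φ ⁻¹' Ioi 0 := by
    rintro ⟨x, v⟩ ⟨hx, hv⟩
    simp only [mem_singleton_iff] at hx
    subst hx
    have hvne : v ≠ 0 := by
      intro h0
      rw [mem_sphere_zero_iff_norm] at hv
      rw [h0] at hv
      simp at hv
    exact hp v hvne
  obtain ⟨U, V, hU, hV, hpU, hSV, hUV⟩ :=
    generalized_tube_lemma isCompact_singleton (isCompact_sphere (0 : Fin d → ℝ) 1)
      hopen hsub
  obtain ⟨r, hr, hball⟩ := Metric.isOpen_iff.1 hU p (hpU rfl)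
  refine ⟨r, hr, fun x hx v hv => ?_⟩
  have hnv : ‖v‖ ≠ 0 := norm_ne_zero_iff.2 hv
  set w : Fin d → ℝ := ‖v‖⁻¹ • v with hw
  have hwS : w ∈ sphere (0 : Fin d → ℝ) 1 := by
    rw [mem_sphere_zero_iff_norm, hw, norm_smul]
    simp [hnv]
  have hΦw : 0 < Φ (x, w) := hUV ⟨hball hx, hSV hwS⟩
  have hscale : Φ (x, v) = ‖v‖ ^ 2 * Φ (x, w) := by
    simp only [hΦ, hw]
    rw [Finset.mul_sum]
    refine Finset.sum_congr rfl fun i _ => ?_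
    rw [Finset.mul_sum]
    refine Finset.sum_congr rfl fun j _ => ?_
    have hvi : (‖v‖⁻¹ • v) i = ‖v‖⁻¹ * v i := rfl
    have hvj : (‖v‖⁻¹ • v) j = ‖v‖⁻¹ * v j := rfl
    rw [hvi, hvj]
    field_simp
  have : 0 < ‖v‖ ^ 2 * Φ (x, w) :=
    mul_pos (by positivity) hΦw
  rw [← hscale] at this
  exact this


open Metric Set

noncomputable def redZ (d : ℕ) (p x : Fin d → ℝ) : Fin d → ℤ :=
  fun j => ⌊x j - p j + 1/2⌋

noncomputable def red (d : ℕ) (p x : Fin d → ℝ) : Fin d → ℝ :=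
  fun j => x j - (redZ d p x j : ℝ)

lemma red_bounds {d : ℕ} (p x : Fin d → ℝ) (j : Fin d) :
    -(1/2) ≤ red d p x j - p j ∧ red d p x j - p j < 1/2 := by
  have h1 : (redZ d p x j : ℝ) ≤ x j - p j + 1/2 := Int.floor_le _
  have h2 : x j - p j + 1/2 - 1 < (redZ d p x j : ℝ) := Int.sub_one_lt_floor _
  constructor
  · simp only [red]; linarith
  · simp only [red]; linarith

lemma red_periodic {d : ℕ} (p x : Fin d → ℝ) (k : Fin d → ℤ) :
    red d p (fun j => x j + (k j : ℝ)) = red d p x := by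
  funext j
  have : redZ d p (fun j => x j + (k j : ℝ)) j = redZ d p x j + k j := by
    simp only [redZ]
    rw [show x j + (k j : ℝ) - p j + 1/2 = (x j - p j + 1/2) + (k j : ℝ) by ring,
      Int.floor_add_intCast]
  simp only [red, this]
  push_cast
  ring

lemma red_of_center {d : ℕ} (p : Fin d → ℝ) : red d p p = p := by
  funext j
  have h0 : redZ d p p j = 0 := by
    simp only [redZ]
    rw [show p j - p j + 1/2 = (1:ℝ)/2 by ring]
    rw [Int.floor_eq_zero_iff]
    constructor <;> norm_num
  simp [red, h0]

theorem periodize_contDiff {d : ℕ} (n : WithTop ℕ∞) (p : Fin d → ℝ) (ρ : ℝ)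
    (hρ0 : 0 < ρ) (hρ : ρ ≤ 1/4) (G : (Fin d → ℝ) → ℝ) (hG : ContDiff ℝ n G)
    (hsupp : ∀ x, ρ < dist x p → G x = 0) :
    ContDiff ℝ n (fun x => G (red d p x)) := by
  rw [contDiff_iff_contDiffAt]
  intro x₀
  by_cases hA : ∀ j, -(1/2) < red d p x₀ j - p j
  · -- interior case: red is locally a translation
    set c : Fin d → ℝ := fun j => (redZ d p x₀ j : ℝ) with hc
    have hev : ∀ᶠ x in nhds x₀, (fun x => G (red d p x)) x = G (x - c) := by
      have hopen : IsOpen {x : Fin d → ℝ | ∀ j,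
          ((redZ d p x₀ j : ℝ) < x j - p j + 1/2 ∧ x j - p j + 1/2 < redZ d p x₀ j + 1)} := by
        rw [show {x : Fin d → ℝ | ∀ j, ((redZ d p x₀ j : ℝ) < x j - p j + 1/2
            ∧ x j - p j + 1/2 < redZ d p x₀ j + 1)}
          = ⋂ j, {x : Fin d → ℝ | ((redZ d p x₀ j : ℝ) < x j - p j + 1/2
            ∧ x j - p j + 1/2 < redZ d p x₀ j + 1)} from by ext x; simp [mem_iInter]]
        refine isOpen_iInter_of_finite fun j => ?_
        refine IsOpen.and ?_ ?_
        · exact isOpen_lt continuous_const ((continuous_apply j).sub continuous_const |>.add continuous_const)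
        · exact isOpen_lt ((continuous_apply j).sub continuous_const |>.add continuous_const) continuous_const
      have hx₀mem : x₀ ∈ {x : Fin d → ℝ | ∀ j,
          ((redZ d p x₀ j : ℝ) < x j - p j + 1/2 ∧ x j - p j + 1/2 < redZ d p x₀ j + 1)} := by
        intro j
        have hb := red_bounds p x₀ j
        have hAj := hA j
        simp only [red] at hb hAj
        constructor <;> [linarith [hAj]; linarith [hb.2]]
      refine Filter.eventually_of_mem (hopen.mem_nhds hx₀mem) fun x hx => ?_
      have hfloor : ∀ j, redZ d p x j = redZ d p x₀ j := by
        intro j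
        have hxj := hx j
        show (⌊x j - p j + 1/2⌋ : ℤ) = redZ d p x₀ j
        rw [Int.floor_eq_iff]
        exact ⟨le_of_lt hxj.1, hxj.2⟩
      have hred : red d p x = x - c := by
        funext j
        simp only [red, hfloor j, hc, Pi.sub_apply]
      show G (red d p x) = G (x - c)
      rw [hred]
    exact ((hG.comp (contDiff_id.sub contDiff_const)).contDiffAt).congr_of_eventuallyEq hev
  · -- boundary case: the function vanishes near x₀
    push_neg at hA
    obtain ⟨j₀, hj₀⟩ := hA
    have hj₀eq : red d p x₀ j₀ - p j₀ = -(1/2) :=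
      le_antisymm hj₀ (red_bounds p x₀ j₀).1
    have hev : ∀ᶠ x in nhds x₀, (fun x => G (red d p x)) x = 0 := by
      refine Filter.eventually_of_mem (Metric.ball_mem_nhds x₀ (by norm_num : (0:ℝ) < 1/8)) ?_
      intro x hx
      have hxd : |x j₀ - x₀ j₀| < 1/8 := by
        have := dist_le_pi_dist x x₀ j₀
        rw [Metric.mem_ball] at hx
        calc |x j₀ - x₀ j₀| = dist (x j₀) (x₀ j₀) := by rw [Real.dist_eq]
          _ ≤ dist x x₀ := dist_le_pi_dist x x₀ j₀
          _ < 1/8 := hx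
      -- the j₀ coordinate of red d p x - p is at least 3/8 in absolute value
      have hint : ∀ z : ℤ, (1:ℝ)/2 ≤ |(z : ℝ) - 1/2| := by
        intro z
        rcases le_or_gt z 0 with hz | hz
        · have : (z : ℝ) ≤ 0 := by exact_mod_cast hz
          rw [abs_of_nonpos (by linarith)]
          linarith
        · have : (1:ℝ) ≤ z := by exact_mod_cast hz
          rw [abs_of_nonneg (by linarith)]
          linarith
      have key : (3:ℝ)/8 ≤ |red d p x j₀ - p j₀| := by
        set r : ℝ := red d p x j₀ - p j₀ with hr
        set ε : ℝ := x j₀ - x₀ j₀ with hε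
        have hdecomp : r = ((redZ d p x₀ j₀ - redZ d p x j₀ : ℤ) : ℝ) - 1/2 + ε := by
          simp only [hr, hε, red]
          have : x₀ j₀ - (redZ d p x₀ j₀ : ℝ) - p j₀ = -(1/2) := hj₀eq
          push_cast
          linarith [this]
        have h1 := hint (redZ d p x₀ j₀ - redZ d p x j₀)
        calc (3:ℝ)/8 = 1/2 - 1/8 := by norm_num
          _ ≤ |((redZ d p x₀ j₀ - redZ d p x j₀ : ℤ) : ℝ) - 1/2| - |ε| := by
              have := abs_le.1 (le_of_lt hxd)
              have habs : |ε| < 1/8 := hxd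
              linarith
          _ ≤ |r| := by
              rw [hdecomp]
              have := abs_sub_abs_le_abs_sub (((redZ d p x₀ j₀ - redZ d p x j₀ : ℤ) : ℝ) - 1/2)
                (-ε)
              calc |((redZ d p x₀ j₀ - redZ d p x j₀ : ℤ) : ℝ) - 1/2| - |ε|
                  = |((redZ d p x₀ j₀ - redZ d p x j₀ : ℤ) : ℝ) - 1/2| - |(-ε)| := by rw [abs_neg]
                _ ≤ |((redZ d p x₀ j₀ - redZ d p x j₀ : ℤ) : ℝ) - 1/2 - (-ε)| :=
                    abs_sub_abs_le_abs_sub _ _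
                _ = |((redZ d p x₀ j₀ - redZ d p x j₀ : ℤ) : ℝ) - 1/2 + ε| := by ring_nf
      have hdist : ρ < dist (red d p x) p := by
        have h1 : |red d p x j₀ - p j₀| ≤ dist (red d p x) p := by
          calc |red d p x j₀ - p j₀| = dist (red d p x j₀) (p j₀) := by rw [Real.dist_eq]
            _ ≤ dist (red d p x) p := dist_le_pi_dist _ _ j₀
        calc ρ ≤ 1/4 := hρ
          _ < 3/8 := by norm_num
          _ ≤ |red d p x j₀ - p j₀| := key
          _ ≤ dist (red d p x) p := h1
      exact hsupp _ hdist
    exact (contDiffAt_const (c := (0:ℝ))).congr_of_eventuallyEq hev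

open scoped BigOperators

/-- `u` is `1`-periodic: `u (x + k) = u x` for all `x ∈ ℝ^d`, `k ∈ ℤ^d`. -/
def ZdPeriodic {α : Type*} (d : ℕ) (u : (Fin d → ℝ) → α) : Prop :=
  ∀ (x : Fin d → ℝ) (k : Fin d → ℤ), u (fun j => x j + (k j : ℝ)) = u x

/-- The set of global minimizers of `f` lying in `[0,1)^d`. -/
def globalMinimizersIco (d : ℕ) (f : (Fin d → ℝ) → ℝ) : Set (Fin d → ℝ) :=
  {x | (∀ j, x j ∈ Set.Ico (0 : ℝ) 1) ∧ ∀ y, f x ≤ f y}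

/-- Lemma 6 of the paper: a nonnegative, `1`-periodic, `(m+2)`-times
continuously differentiable function whose global minimizers in `[0,1)^d` are finitely
many with positive definite Hessian is a finite sum of squares of `1`-periodic `C^m`
functions. -/
theorem stmt_9 (d m : ℕ) (hd : 1 ≤ d) (f : (Fin d → ℝ) → ℝ)
    (hf_per : ZdPeriodic d f) (hf_smooth : ContDiff ℝ (m + 2 : ℕ) f)
    (hf_nonneg : ∀ x, 0 ≤ f x)
    (hfin : (globalMinimizersIco d f).Finite)
    (hhess : ∀ x ∈ globalMinimizersIco d f, ∀ v : Fin d → ℝ, v ≠ 0 →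
      0 < iteratedFDeriv ℝ 2 f x (fun _ => v)) :
    ∃ (Q : ℕ) (z : Fin Q → (Fin d → ℝ) → ℝ),
      (∀ j, ZdPeriodic d (z j) ∧ ContDiff ℝ (m : ℕ) (z j)) ∧
        ∀ x, f x = ∑ j, (z j x) ^ 2 := by
  classical
  have hfm : ContDiff ℝ (m : ℕ) f := hf_smooth.of_le (by exact_mod_cast Nat.le_add_right m 2)
  by_cases hzero : ∃ x₀, f x₀ = 0
  swap
  · push_neg at hzero
    have hpos : ∀ x, 0 < f x := fun x => lt_of_le_of_ne (hf_nonneg x) (Ne.symm (hzero x))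
    refine ⟨1, fun _ x => Real.sqrt (f x), fun j => ⟨fun x k => by
        show Real.sqrt (f (fun j => x j + (k j:ℝ))) = Real.sqrt (f x)
        rw [hf_per x k], ?_⟩,
      fun x => ?_⟩
    · rw [contDiff_iff_contDiffAt]
      intro x
      exact (Real.contDiffAt_sqrt (hpos x).ne').comp x hfm.contDiffAt
    · rw [Fin.sum_univ_one, Real.sq_sqrt (hf_nonneg x)]
  obtain ⟨x₀, hx₀⟩ := hzero
  set S : Finset (Fin d → ℝ) := hfin.toFinset with hS
  have hSmem : ∀ p ∈ S, (∀ j, p j ∈ Set.Ico (0:ℝ) 1) ∧ ∀ y, f p ≤ f y := by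
    intro p hp
    rw [hS, Set.Finite.mem_toFinset] at hp
    exact hp
  have hSzero : ∀ p ∈ S, f p = 0 :=
    fun p hp => le_antisymm (by simpa [hx₀] using (hSmem p hp).2 x₀) (hf_nonneg p)
  have hScrit : ∀ p ∈ S, fderiv ℝ f p = 0 := by
    intro p hp
    have hlm : IsLocalMin f p := Filter.Eventually.of_forall fun y => (hSmem p hp).2 y
    exact hlm.fderiv_eq_zero
  have hShess : ∀ p ∈ S, ∀ v : Fin d → ℝ, v ≠ 0 →
      0 < fderiv ℝ (fderiv ℝ f) p v v := by
    intro p hp v hv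
    have hp' : p ∈ globalMinimizersIco d f := by
      rw [hS, Set.Finite.mem_toFinset] at hp; exact hp
    have h := hhess p hp' v hv
    rwa [iteratedFDeriv_two_apply] at h
  have hbox : ∀ x : Fin d → ℝ, f x = 0 → ∃ p ∈ S, ∃ k : Fin d → ℤ,
      x = fun j => p j + (k j : ℝ) := by
    intro x hx
    have hfp : f (fun j => x j - (⌊x j⌋:ℝ)) = f x := by
      have h := hf_per x (fun j => -⌊x j⌋)
      have heq : (fun j => x j + ((- ⌊x j⌋ : ℤ) : ℝ)) = fun j => x j - (⌊x j⌋:ℝ) := by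
        funext j; push_cast; ring
      rw [heq] at h
      exact h
    refine ⟨fun j => x j - (⌊x j⌋:ℝ), ?_, fun j => ⌊x j⌋, by funext j; ring⟩
    rw [hS, Set.Finite.mem_toFinset]
    refine ⟨fun j => ?_, fun y => ?_⟩
    · simp only [Set.mem_Ico]
      refine ⟨sub_nonneg.2 (Int.floor_le _), ?_⟩
      have := Int.lt_floor_add_one (x j)
      linarith
    rw [hfp, hx]
    exact hf_nonneg y
  have hSne : S.Nonempty := by
    obtain ⟨p, hp, _, _⟩ := hbox x₀ hx₀
    exact ⟨p, hp⟩
  -- local Hessian decompositions around each zero in the box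
  choose g hg_cd hg_symm hg_val hg_id using
    fun q : {p // p ∈ S} => hessian_sos_local d m f hf_smooth q.1
      (hSzero q.1 q.2) (hScrit q.1 q.2)
  have hg_pd_center : ∀ q : {p // p ∈ S}, ∀ v : Fin d → ℝ, v ≠ 0 →
      0 < ∑ i, ∑ j, v i * v j * g q i j q.1 := by
    intro q v hv
    rw [hg_val q v]
    have h := hShess q.1 q.2 v hv
    linarith
  choose rp hrp_pos hrp_pd using
    fun q : {p // p ∈ S} => posdef_on_ball (g q) (fun i j => (hg_cd q i j).continuous) q.1
      (hg_pd_center q)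
  -- a uniform small radius
  have hattach_ne : S.attach.Nonempty := Finset.attach_nonempty_iff.2 hSne
  set r : ℝ := min (1/16) (S.attach.inf' hattach_ne fun q => rp q / 3) with hr_def
  have hr0 : 0 < r := by
    rw [hr_def, lt_min_iff]
    refine ⟨by norm_num, ?_⟩
    rw [Finset.lt_inf'_iff]
    intro q _
    have := hrp_pos q
    linarith
  have hr16 : r ≤ 1/16 := min_le_left _ _
  have hr3 : ∀ q : {p // p ∈ S}, 3 * r ≤ rp q := by
    intro q
    have h1 : r ≤ rp q / 3 :=
      le_trans (min_le_right _ _) (Finset.inf'_le _ (Finset.mem_attach S q))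
    linarith
  -- local sum-of-squares on balls of radius 3r
  have hU_pd : ∀ q : {p // p ∈ S}, ∀ x ∈ ball q.1 (3*r), ∀ w : Fin d → ℝ, w ≠ 0 →
      0 < ∑ i, ∑ j, w i * w j * g q i j x := by
    intro q x hx w hw
    exact hrp_pd q x (ball_subset_ball (hr3 q) hx) w hw
  choose L hL_cd hL_id using
    fun q : {p // p ∈ S} => sos_of_posdef_quadratic ((m:ℕ) : WithTop ℕ∞) d (ball q.1 (3*r))
      isOpen_ball (g q) (fun i j => (hg_cd q i j).contDiffOn)
      (fun i j x _ => hg_symm q i j x) (hU_pd q)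
  set w : {p // p ∈ S} → Fin d → (Fin d → ℝ) → ℝ :=
    fun q i x => ∑ j, L q i j x * (x j - q.1 j) with hw_def
  have hw_cd : ∀ q i, ContDiffOn ℝ (m:ℕ) (w q i) (ball q.1 (3*r)) := by
    intro q i
    refine ContDiffOn.sum fun j _ => (hL_cd q i j).mul ?_
    exact (((ContinuousLinearMap.proj j : (Fin d → ℝ) →L[ℝ] ℝ).contDiff).sub
      contDiff_const).contDiffOn
  have hfw : ∀ q : {p // p ∈ S}, ∀ x ∈ ball q.1 (3*r), f x = ∑ i, (w q i x)^2 := by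
    intro q x hx
    rw [hg_id q x]
    exact hL_id q x hx (fun j => x j - q.1 j)
  -- bump functions
  set η : (q : {p // p ∈ S}) → ContDiffBump q.1 :=
    fun q => ⟨r, 2*r, hr0, by linarith⟩ with hη_def
  have hη_rIn : ∀ q, (η q).rIn = r := fun q => rfl
  have hη_rOut : ∀ q, (η q).rOut = 2*r := fun q => rfl
  set G : {p // p ∈ S} → Fin d → (Fin d → ℝ) → ℝ :=
    fun q i x => η q x * w q i x with hG_def
  have hG_supp : ∀ q i x, 2*r < dist x q.1 → G q i x = 0 := by
    intro q i x h
    have h0 : η q x = 0 := (η q).zero_of_le_dist (by rw [hη_rOut]; exact h.le)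
    simp only [hG_def, h0, zero_mul]
  have hmtop : ((m:ℕ) : WithTop ℕ∞) ≤ (((⊤:ℕ∞)) : WithTop ℕ∞) := by
    exact_mod_cast le_top
  have hη_cd : ∀ q, ContDiff ℝ (m:ℕ) (⇑(η q)) :=
    fun q => ((η q).contDiff (n := (⊤:ℕ∞))).of_le hmtop
  have hG_cd : ∀ q i, ContDiff ℝ (m:ℕ) (G q i) := by
    intro q i
    rw [contDiff_iff_contDiffAt]
    intro x
    by_cases hx : x ∈ ball q.1 (3*r)
    · exact ((hη_cd q).contDiffAt).mul ((hw_cd q i).contDiffAt (isOpen_ball.mem_nhds hx))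
    · have hev : ∀ᶠ y in nhds x, G q i y = 0 := by
        refine Filter.eventually_of_mem (ball_mem_nhds x hr0) fun y hy => ?_
        apply hG_supp
        have h1 : 3*r ≤ dist x q.1 := not_lt.1 (fun h => hx (mem_ball.2 h))
        have h2 : dist y x < r := mem_ball.1 hy
        have h3 := dist_triangle x y q.1
        have h4 : dist x y = dist y x := dist_comm x y
        linarith
      exact contDiffAt_const.congr_of_eventuallyEq hev
  -- periodized objects
  set hatG : {p // p ∈ S} → Fin d → (Fin d → ℝ) → ℝ :=
    fun q i x => G q i (red d q.1 x) with hhatG_def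
  set χ : {p // p ∈ S} → (Fin d → ℝ) → ℝ :=
    fun q x => η q (red d q.1 x) with hχ_def
  have h2r14 : (2*r : ℝ) ≤ 1/4 := by linarith
  have hhatG_cd : ∀ q i, ContDiff ℝ (m:ℕ) (hatG q i) :=
    fun q i => periodize_contDiff ((m:ℕ) : WithTop ℕ∞) q.1 (2*r) (by linarith) h2r14
      (G q i) (hG_cd q i) (fun x h => hG_supp q i x h)
  have hχ_cd : ∀ q, ContDiff ℝ (m:ℕ) (χ q) :=
    fun q => periodize_contDiff ((m:ℕ) : WithTop ℕ∞) q.1 (2*r) (by linarith) h2r14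
      (⇑(η q)) (hη_cd q) (fun x h => (η q).zero_of_le_dist (by rw [hη_rOut]; exact h.le))
  have hχ_per : ∀ q, ZdPeriodic d (χ q) := by
    intro q x k
    simp only [hχ_def]
    rw [red_periodic]
  have hhatG_per : ∀ q i, ZdPeriodic d (hatG q i) := by
    intro q i x k
    simp only [hhatG_def]
    rw [red_periodic]
  -- partition functions
  set ψ : (Fin d → ℝ) → ℝ := fun x => ∏ q : {p // p ∈ S}, (1 - χ q x) with hψ_def
  have hψ_cd : ContDiff ℝ (m:ℕ) ψ :=
    contDiff_prod fun q _ => contDiff_const.sub (hχ_cd q)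
  have hψ_per : ZdPeriodic d ψ := by
    intro x k
    simp only [hψ_def]
    exact Finset.prod_congr rfl fun q _ => by rw [hχ_per q x k]
  set D : (Fin d → ℝ) → ℝ := fun x => ψ x ^ 2 + ∑ q : {p // p ∈ S}, χ q x ^ 2 with hD_def
  have hD_cd : ContDiff ℝ (m:ℕ) D :=
    (hψ_cd.pow 2).add (ContDiff.sum fun q _ => (hχ_cd q).pow 2)
  have hD_per : ZdPeriodic d D := by
    intro x k
    simp only [hD_def]
    rw [hψ_per x k]
    congr 1
    exact Finset.sum_congr rfl fun q _ => by rw [hχ_per q x k]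
  have hD_pos : ∀ x, 0 < D x := by
    intro x
    by_cases hall : ∀ q : {p // p ∈ S}, χ q x = 0
    · have hψ1 : ψ x = 1 := by
        simp only [hψ_def]
        rw [Finset.prod_congr rfl fun q _ => by rw [hall q]]
        simp
      simp only [hD_def, hψ1]
      have : (0:ℝ) ≤ ∑ q : {p // p ∈ S}, χ q x ^ 2 :=
        Finset.sum_nonneg fun q _ => sq_nonneg _
      nlinarith
    · push_neg at hall
      obtain ⟨q, hq⟩ := hall
      have h1 : 0 < χ q x ^ 2 := by positivity
      have h2 : χ q x ^ 2 ≤ ∑ q' : {p // p ∈ S}, χ q' x ^ 2 :=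
        Finset.single_le_sum (f := fun q' : {p // p ∈ S} => χ q' x ^ 2)
          (fun q' _ => sq_nonneg _) (Finset.mem_univ q)
      have h3 : (0:ℝ) ≤ ψ x ^ 2 := sq_nonneg _
      simp only [hD_def]
      linarith
  set sD : (Fin d → ℝ) → ℝ := fun x => Real.sqrt (D x) with hsD_def
  have hsD_pos : ∀ x, 0 < sD x := fun x => Real.sqrt_pos.2 (hD_pos x)
  have hsD_sq : ∀ x, sD x ^ 2 = D x := fun x => Real.sq_sqrt (hD_pos x).le
  have hsD_cd : ContDiff ℝ (m:ℕ) sD := by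
    rw [contDiff_iff_contDiffAt]
    intro x
    exact (Real.contDiffAt_sqrt (hD_pos x).ne').comp x hD_cd.contDiffAt
  have hsD_per : ZdPeriodic d sD := by
    intro x k
    simp only [hsD_def]
    rw [hD_per x k]
  -- χ equals 1 near the zeros of f
  have hχ_one : ∀ (q : {p // p ∈ S}) (k : Fin d → ℤ) (y : Fin d → ℝ),
      dist y (fun j => q.1 j + (k j:ℝ)) < r → χ q y = 1 := by
    intro q k y hy
    have hfloor : ∀ j, redZ d q.1 y j = k j := by
      intro j
      have hcoord : |y j - (q.1 j + (k j:ℝ))| ≤ dist y (fun j => q.1 j + (k j:ℝ)) := by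
        rw [← Real.dist_eq]
        exact dist_le_pi_dist y (fun j' => q.1 j' + (k j':ℝ)) j
      have habs : |y j - (q.1 j + (k j:ℝ))| < 1/2 :=
        lt_of_le_of_lt hcoord (lt_of_lt_of_le hy (by linarith))
      obtain ⟨hl, hr'⟩ := abs_lt.1 habs
      show (⌊y j - q.1 j + 1/2⌋ : ℤ) = k j
      rw [Int.floor_eq_iff]
      constructor
      · linarith
      · push_cast
        linarith
    have hred : red d q.1 y = fun j => y j - (k j:ℝ) := by
      funext j
      simp only [red, hfloor j]
    apply (η q).one_of_mem_closedBall
    rw [mem_closedBall, hη_rIn]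
    have hle : dist (red d q.1 y) q.1 ≤ dist y (fun j => q.1 j + (k j:ℝ)) := by
      rw [hred, dist_pi_le_iff dist_nonneg]
      intro j
      calc dist (y j - (k j:ℝ)) (q.1 j) = dist (y j) (q.1 j + (k j:ℝ)) := by
            rw [Real.dist_eq, Real.dist_eq]
            congr 1
            ring
        _ ≤ dist y (fun j => q.1 j + (k j:ℝ)) := dist_le_pi_dist y (fun j' => q.1 j' + (k j':ℝ)) j
    exact le_trans hle hy.le
  -- ψ vanishes near the zeros of f
  have hψ_near : ∀ x, f x = 0 → ∀ y, dist y x < r → ψ x = 0 ∧ ψ y = 0 := by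
    intro x hx y hy
    obtain ⟨p, hp, k, hxeq⟩ := hbox x hx
    have hzero_y : ψ y = 0 := by
      have h1 : χ ⟨p, hp⟩ y = 1 := by
        apply hχ_one ⟨p, hp⟩ k y
        rw [← hxeq]
        exact hy
      simp only [hψ_def]
      refine Finset.prod_eq_zero (Finset.mem_univ (⟨p,hp⟩ : {p // p ∈ S})) ?_
      rw [h1]
      ring
    have hzero_x : ψ x = 0 := by
      have h1 : χ ⟨p, hp⟩ x = 1 := by
        apply hχ_one ⟨p, hp⟩ k x
        rw [← hxeq]
        simpa using hr0
      simp only [hψ_def]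
      refine Finset.prod_eq_zero (Finset.mem_univ (⟨p,hp⟩ : {p // p ∈ S})) ?_
      rw [h1]
      ring
    exact ⟨hzero_x, hzero_y⟩
  -- the functions z
  set z0 : (Fin d → ℝ) → ℝ := fun x => ψ x * Real.sqrt (f x) / sD x with hz0_def
  set zp : {p // p ∈ S} → Fin d → (Fin d → ℝ) → ℝ :=
    fun q i x => hatG q i x / sD x with hzp_def
  have hz0_per : ZdPeriodic d z0 := by
    intro x k
    simp only [hz0_def]
    rw [hψ_per x k, hf_per x k, hsD_per x k]
  have hzp_per : ∀ q i, ZdPeriodic d (zp q i) := by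
    intro q i x k
    simp only [hzp_def]
    rw [hhatG_per q i x k, hsD_per x k]
  have hz0_cd : ContDiff ℝ (m:ℕ) z0 := by
    rw [contDiff_iff_contDiffAt]
    intro x
    by_cases hfx : f x = 0
    · have hev : ∀ᶠ y in nhds x, z0 y = 0 := by
        refine Filter.eventually_of_mem (ball_mem_nhds x hr0) fun y hy => ?_
        have := (hψ_near x hfx y (mem_ball.1 hy)).2
        simp only [hz0_def, this, zero_mul, zero_div]
      exact contDiffAt_const.congr_of_eventuallyEq hev
    · have hfx' : 0 < f x := lt_of_le_of_ne (hf_nonneg x) (Ne.symm hfx)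
      exact ((hψ_cd.contDiffAt.mul
        ((Real.contDiffAt_sqrt hfx'.ne').comp x hfm.contDiffAt)).div
        hsD_cd.contDiffAt (hsD_pos x).ne')
  have hzp_cd : ∀ q i, ContDiff ℝ (m:ℕ) (zp q i) := by
    intro q i
    rw [contDiff_iff_contDiffAt]
    intro x
    exact ((hhatG_cd q i).contDiffAt.div hsD_cd.contDiffAt (hsD_pos x).ne')
  -- sum of squares identities
  have hfred : ∀ (q : {p // p ∈ S}) x, f (red d q.1 x) = f x := by
    intro q x
    have h := hf_per (red d q.1 x) (redZ d q.1 x)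
    have heq : (fun j => red d q.1 x j + (redZ d q.1 x j : ℝ)) = x := by
      funext j
      simp only [red]
      ring
    rw [heq] at h
    exact h.symm
  have hhat_sum : ∀ (q : {p // p ∈ S}) x, ∑ i, hatG q i x ^ 2 = χ q x ^ 2 * f x := by
    intro q x
    by_cases hη0 : η q (red d q.1 x) = 0
    · have hz : ∀ i, hatG q i x = 0 := by
        intro i
        simp only [hhatG_def, hG_def, hη0, zero_mul]
      have hχ0 : χ q x = 0 := hη0
      rw [Finset.sum_congr rfl fun i _ => by rw [hz i], hχ0]
      simp
    · have hmem : red d q.1 x ∈ ball q.1 (3*r) := by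
        have h1 : red d q.1 x ∈ Function.support (⇑(η q)) := hη0
        rw [(η q).support_eq, hη_rOut] at h1
        exact ball_subset_ball (by linarith) h1
      have hsum : ∑ i, hatG q i x ^ 2 = χ q x ^ 2 * ∑ i, (w q i (red d q.1 x))^2 := by
        rw [Finset.mul_sum]
        refine Finset.sum_congr rfl fun i _ => ?_
        simp only [hhatG_def, hG_def, hχ_def]
        ring
      rw [hsum, ← hfw q _ hmem, hfred q x]
  -- packaging
  set Z : Option ({p // p ∈ S} × Fin d) → (Fin d → ℝ) → ℝ :=
    fun o => Option.elim o z0 (fun qi => zp qi.1 qi.2) with hZ_def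
  have hZ_props : ∀ o, ZdPeriodic d (Z o) ∧ ContDiff ℝ (m:ℕ) (Z o) := by
    rintro (_ | ⟨q, i⟩)
    · exact ⟨hz0_per, hz0_cd⟩
    · exact ⟨hzp_per q i, hzp_cd q i⟩
  have hZ_sum : ∀ x, f x = ∑ o : Option ({p // p ∈ S} × Fin d), (Z o x)^2 := by
    intro x
    rw [Fintype.sum_option]
    have h0 : Z none x ^ 2 = ψ x ^ 2 * f x / D x := by
      simp only [hZ_def, Option.elim, hz0_def]
      rw [div_pow, mul_pow, Real.sq_sqrt (hf_nonneg x), hsD_sq x]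
    have h1 : ∑ qi : {p // p ∈ S} × Fin d, (Z (some qi) x)^2
        = (∑ q : {p // p ∈ S}, χ q x ^ 2) * f x / D x := by
      rw [Fintype.sum_prod_type]
      have hq : ∀ q : {p // p ∈ S}, ∑ i, (Z (some (q, i)) x)^2 = χ q x ^ 2 * f x / D x := by
        intro q
        have : ∀ i : Fin d, (Z (some (q, i)) x)^2 = hatG q i x ^ 2 / D x := by
          intro i
          simp only [hZ_def, Option.elim, hzp_def]
          rw [div_pow, hsD_sq x]
        rw [Finset.sum_congr rfl fun i _ => this i, ← Finset.sum_div, hhat_sum q x]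
      rw [Finset.sum_congr rfl fun q _ => hq q, ← Finset.sum_div]
      congr 1
      rw [← Finset.sum_mul]
    rw [h0, h1]
    have hcalc : ψ x ^ 2 * f x / D x + (∑ q : {p // p ∈ S}, χ q x ^ 2) * f x / D x
        = D x * f x / D x := by
      rw [← add_div]
      congr 1
      simp only [hD_def]
      ring
    rw [hcalc, mul_comm, mul_div_assoc, div_self (hD_pos x).ne', mul_one]
  refine ⟨Fintype.card (Option ({p // p ∈ S} × Fin d)),
    fun j => Z ((Fintype.equivFin (Option ({p // p ∈ S} × Fin d))).symm j), ?_, ?_⟩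
  · intro j
    exact hZ_props _
  · intro x
    rw [hZ_sum x]
    exact (Equiv.sum_comp (Fintype.equivFin (Option ({p // p ∈ S} × Fin d))).symm
      (fun o => (Z o x)^2)).symm
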